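/- Define f : ℝ → ℝ by f(x) = |x| if |x| ≤ 1 and f(x) = 1 if |x| > 1, and let W : ℝ → ℝ be the 1-periodic function with W(y) = 1/2 − |y| for y ∈ [−1/2, 1/2]. Then for every ε ∈ (0,1), every t > 0, and every absolutely continuous curve η : [0,t] → ℝ, one has ∫₀ᵗ ( f(η(s)) + W(η(s)/ε) + |η̇(s)|²/2 ) ds ≥ ε t / 2. -/
import Mathlib


open MeasureTheory Real Set

noncomputable section

/-- `f(x) = |x|` for `|x| ≤ 1`, and `f(x) = 1` for `|x| > 1`. -/
def f (x : ℝ) : ℝ := if |x| ≤ 1 then |x| else 1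

/-- The 1-periodic extension of `y ↦ 1/2 − |y|` from `[−1/2, 1/2]`; equivalently
`W(y) = 1/2 − dist(y, ℤ)`. -/
def W (y : ℝ) : ℝ := 1/2 - |y - round y|

/-- `η : [a,b] → ℝ` is absolutely continuous with (a.e.) derivative `η'`. -/
def IsAC1 (a b : ℝ) (η η' : ℝ → ℝ) : Prop :=
  IntegrableOn η' (Icc a b) volume ∧
    ∀ c d : ℝ, a ≤ c → c ≤ d → d ≤ b → η d - η c = ∫ s in c..d, η' s

lemma key_bound (ε : ℝ) (hε : 0 < ε) (hε1 : ε < 1) (x : ℝ) :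
    ε / 2 ≤ f x + W (x / ε) := by
  by_cases h : |x| < ε / 2
  · have hx : |x / ε| < 1 / 2 := by
      rw [abs_div, abs_of_pos hε, div_lt_div_iff₀ (by positivity) (by norm_num)]
      linarith
    have hr : round (x / ε) = 0 := by
      rw [round_eq_zero_iff]
      constructor
      · linarith [abs_lt.mp hx |>.1]
      · linarith [abs_lt.mp hx |>.2]
    have hf : f x = |x| := by
      unfold f; rw [if_pos (by linarith)]
    rw [hf]
    unfold W
    rw [hr]
    push_cast
    rw [sub_zero, abs_div, abs_of_pos hε]
    have hxε : |x| / ε < 1 / 2 := by rwa [abs_div, abs_of_pos hε] at hx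
    have h0 : 0 ≤ |x| := abs_nonneg x
    have h1 : 0 ≤ |x| / ε := by positivity
    nlinarith [mul_nonneg (by linarith : (0:ℝ) ≤ 1/2 - |x|/ε) (by linarith : (0:ℝ) ≤ 1 - ε), div_mul_cancel₀ |x| (ne_of_gt hε)]
  · push_neg at h
    have hW : 0 ≤ W (x / ε) := by
      unfold W; linarith [abs_sub_round (x / ε)]
    have hf : ε / 2 ≤ f x := by
      unfold f
      split
      · linarith
      · linarith
    linarith

/-- Proposition 4.4(i) (variational content): every admissible curve pays cost at
least `εt/2` on `[0,t]`.  The cost integral is taken in `[0,∞]` since the integrand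
is nonnegative. -/
theorem stmt_11 :
    ∀ ε : ℝ, 0 < ε → ε < 1 → ∀ t : ℝ, 0 < t →
      ∀ η η' : ℝ → ℝ, IsAC1 0 t η η' →
        ENNReal.ofReal (ε * t / 2) ≤
          ∫⁻ s in Icc (0:ℝ) t,
            ENNReal.ofReal (f (η s) + W (η s / ε) + |η' s| ^ 2 / 2) := by
  intro ε hε hε1 t ht η η' _
  calc ENNReal.ofReal (ε * t / 2)
      = ENNReal.ofReal (ε / 2) * ENNReal.ofReal t := by
        rw [← ENNReal.ofReal_mul (by positivity)]; ring_nf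
    _ = ∫⁻ _ in Icc (0:ℝ) t, ENNReal.ofReal (ε / 2) := by
        rw [setLIntegral_const, Real.volume_Icc, sub_zero]
    _ ≤ _ := by
        refine lintegral_mono fun s => ENNReal.ofReal_le_ofReal ?_
        have := key_bound ε hε hε1 (η s)
        have h2 : 0 ≤ |η' s| ^ 2 / 2 := by positivity
        linarith
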